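/- For every s-finite kernel ν : X ⇝ Y with Y a standard Borel space, there exists a sub-probability kernel μ : X ⇝ Y and a jointly measurable function f : X × Y → [0,∞] such that ν(x,A) = ∫_A f(x,y) μ(x,dy) for all x, A, and moreover μ(x)({y : f(x,y)=0}) = 0 for all x. -/

import Mathlib

open MeasureTheory ProbabilityTheory

section Aux

variable {X Y : Type*} [MeasurableSpace X] [MeasurableSpace Y]

/-- The weight used to normalize the `n`-th finite piece of an s-finite kernel. -/
noncomputable def subprobWeight (ν : Kernel X Y) [IsSFiniteKernel ν] (n : ℕ) (x : X) : ENNReal :=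
  ((2 : ENNReal) ^ (n + 1))⁻¹ * (Kernel.seq ν n x Set.univ + 1)⁻¹

lemma measurable_subprobWeight (ν : Kernel X Y) [IsSFiniteKernel ν] (n : ℕ) :
    Measurable (subprobWeight ν n) := by
  exact (measurable_const.mul (((Kernel.seq ν n).measurable_coe MeasurableSet.univ).add
    measurable_const).inv)

lemma subprobWeight_ne_zero (ν : Kernel X Y) [IsSFiniteKernel ν] (n : ℕ) (x : X) :
    subprobWeight ν n x ≠ 0 := by
  have h1 : ((2 : ENNReal) ^ (n + 1))⁻¹ ≠ 0 := by
    simp [ENNReal.pow_ne_top]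
  have h2 : (Kernel.seq ν n x Set.univ + 1)⁻¹ ≠ 0 := by
    simp only [ne_eq, ENNReal.inv_eq_zero]
    exact ENNReal.add_ne_top.mpr
      ⟨((Kernel.measure_le_bound (Kernel.seq ν n) x _).trans_lt
        (ProbabilityTheory.Kernel.bound_lt_top (Kernel.seq ν n))).ne, ENNReal.one_ne_top⟩
  exact mul_ne_zero h1 h2

lemma subprobWeight_le (ν : Kernel X Y) [IsSFiniteKernel ν] (n : ℕ) (x : X) :
    subprobWeight ν n x ≤ ((2 : ENNReal) ^ (n + 1))⁻¹ :=
  mul_le_of_le_one_right zero_le (by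
    simp only [ENNReal.inv_le_one]
    exact le_add_left le_rfl)

/-- The normalized sub-probability kernel associated to an s-finite kernel. -/
noncomputable def subprobKernel (ν : Kernel X Y) [IsSFiniteKernel ν] : Kernel X Y :=
  Kernel.sum fun n => Kernel.withDensity (Kernel.seq ν n) (fun x _ => subprobWeight ν n x)

lemma subprobKernel_apply (ν : Kernel X Y) [IsSFiniteKernel ν] (x : X) {A : Set Y}
    (hA : MeasurableSet A) :
    subprobKernel ν x A = ∑' n, subprobWeight ν n x * Kernel.seq ν n x A := by
  rw [subprobKernel, Kernel.sum_apply' _ x hA]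
  congr 1
  ext n
  rw [Kernel.withDensity_apply' _ (by exact (measurable_subprobWeight ν n).comp measurable_fst) x A,
    setLIntegral_const]

lemma tsum_two_pow_inv : (∑' n : ℕ, ((2 : ENNReal) ^ (n + 1))⁻¹) = 1 := by
  have : ∀ n : ℕ, ((2 : ENNReal) ^ (n + 1))⁻¹ = 2⁻¹ * (2⁻¹ : ENNReal) ^ n := by
    intro n
    rw [← ENNReal.inv_pow, pow_succ', ENNReal.mul_inv (Or.inl (by norm_num)) (Or.inl (by norm_num))]
  simp_rw [this]
  rw [ENNReal.tsum_mul_left, ENNReal.tsum_geometric, ENNReal.one_sub_inv_two, inv_inv]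
  exact ENNReal.inv_mul_cancel (by norm_num) (by norm_num)

lemma subprobKernel_le_one (ν : Kernel X Y) [IsSFiniteKernel ν] (x : X) :
    subprobKernel ν x Set.univ ≤ 1 := by
  rw [subprobKernel_apply ν x MeasurableSet.univ, ← tsum_two_pow_inv]
  refine ENNReal.tsum_le_tsum fun n => ?_
  calc subprobWeight ν n x * Kernel.seq ν n x Set.univ
      ≤ ((2 : ENNReal) ^ (n + 1))⁻¹ * ((Kernel.seq ν n x Set.univ + 1)⁻¹
          * (Kernel.seq ν n x Set.univ + 1)) := by
        rw [subprobWeight, mul_assoc]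
        gcongr
        exact le_add_right le_rfl
    _ ≤ ((2 : ENNReal) ^ (n + 1))⁻¹ := by
        rw [ENNReal.inv_mul_cancel (by simp) (ENNReal.add_ne_top.mpr
          ⟨((Kernel.measure_le_bound (Kernel.seq ν n) x _).trans_lt
            (ProbabilityTheory.Kernel.bound_lt_top (Kernel.seq ν n))).ne,
            ENNReal.one_ne_top⟩), mul_one]

instance subprobKernel_isFinite (ν : Kernel X Y) [IsSFiniteKernel ν] :
    IsFiniteKernel (subprobKernel ν) :=
  ⟨⟨1, ENNReal.one_lt_top, fun x => subprobKernel_le_one ν x⟩⟩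

lemma seq_absolutelyContinuous (ν : Kernel X Y) [IsSFiniteKernel ν] (n : ℕ) (x : X) :
    Kernel.seq ν n x ≪ subprobKernel ν x := by
  refine MeasureTheory.Measure.AbsolutelyContinuous.mk fun A hA hμA => ?_
  rw [subprobKernel_apply ν x hA, ENNReal.tsum_eq_zero] at hμA
  have := hμA n
  rcases mul_eq_zero.mp this with h | h
  · exact absurd h (subprobWeight_ne_zero ν n x)
  · exact h

lemma subprobKernel_le (ν : Kernel X Y) [IsSFiniteKernel ν] (x : X) {A : Set Y}
    (hA : MeasurableSet A) :
    subprobKernel ν x A ≤ ν x A := by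
  rw [subprobKernel_apply ν x hA]
  conv_rhs => rw [← Kernel.kernel_sum_seq ν, Kernel.sum_apply' _ x hA]
  refine ENNReal.tsum_le_tsum fun n => ?_
  refine mul_le_of_le_one_left zero_le ?_
  refine (subprobWeight_le ν n x).trans ?_
  simp only [ENNReal.inv_le_one]
  exact one_le_two.trans (le_self_pow₀ (by norm_num) (Nat.succ_ne_zero n))

end Aux

/-- Every s-finite kernel `ν : X ⇝ Y` into a standard Borel space `Y` can be written as a
sub-probability kernel `μ` weighted by a jointly measurable density `f` which is moreover
`μ(x)`-a.e. nonzero. -/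
theorem sfinite_eq_subprob_withDensity {X Y : Type*} [MeasurableSpace X] [MeasurableSpace Y]
    [StandardBorelSpace Y] (ν : Kernel X Y) [IsSFiniteKernel ν] :
    ∃ (μ : Kernel X Y) (f : X × Y → ENNReal),
      (∀ x, μ x Set.univ ≤ 1) ∧ Measurable f ∧
      (∀ x A, MeasurableSet A → ν x A = ∫⁻ y in A, f (x, y) ∂(μ x)) ∧
      (∀ x, μ x {y | f (x, y) = 0} = 0) := by
  set μ := subprobKernel ν with hμ
  set f : X × Y → ENNReal := fun p => ∑' n, Kernel.rnDeriv (Kernel.seq ν n) μ p.1 p.2 with hf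
  have hf_meas : Measurable f := by
    refine Measurable.ennreal_tsum fun n => ?_
    exact Kernel.measurable_rnDeriv (Kernel.seq ν n) μ
  have hseq : ∀ n x, Kernel.withDensity μ (Kernel.rnDeriv (Kernel.seq ν n) μ) x
      = Kernel.seq ν n x := fun n x =>
    Kernel.withDensity_rnDeriv_eq (seq_absolutelyContinuous ν n x)
  have h_eq : ∀ x A, MeasurableSet A → ν x A = ∫⁻ y in A, f (x, y) ∂(μ x) := by
    intro x A hA
    conv_lhs => rw [← Kernel.kernel_sum_seq ν, Kernel.sum_apply' _ x hA]
    have : ∀ n, Kernel.seq ν n x A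
        = ∫⁻ y in A, Kernel.rnDeriv (Kernel.seq ν n) μ x y ∂(μ x) := by
      intro n
      rw [← hseq n x, Kernel.withDensity_apply' _ (Kernel.measurable_rnDeriv _ _) x A]
    simp_rw [this]
    rw [← lintegral_tsum fun n => (Kernel.measurable_rnDeriv_right _ _ x).aemeasurable]
  refine ⟨μ, f, fun x => subprobKernel_le_one ν x, hf_meas, h_eq, fun x => ?_⟩
  have hS : MeasurableSet {y | f (x, y) = 0} :=
    (hf_meas.comp measurable_prodMk_left) (measurableSet_singleton 0)
  refine le_antisymm ?_ zero_le
  calc μ x {y | f (x, y) = 0} ≤ ν x {y | f (x, y) = 0} := subprobKernel_le ν x hS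
    _ = ∫⁻ y in {y | f (x, y) = 0}, f (x, y) ∂(μ x) := h_eq x _ hS
    _ = 0 := by
        rw [setLIntegral_congr_fun hS (fun y hy => hy),
          lintegral_zero]
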